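/- For every m ∈ ZMod r: if r ≡ 1 (mod 4) then the complex conjugate of s(m) equals −s(m) (s(m) is purely imaginary), and if r ≡ 3 (mod 4) then the complex conjugate of s(m) equals s(m) (s(m) is real). -/

import Mathlib

open Complex Finset

/-- For `n ∈ ZMod r`, the complex number `ζ^n = exp(2πi·n̂/r)` where `n̂` is the
canonical lift of `n`. -/
noncomputable def zmodExp (r : ℕ) (n : ZMod r) : ℂ :=
  Complex.exp (2 * Real.pi * Complex.I * (n.val : ℂ) / (r : ℂ))

/-- The S-matrix of the unfolded SL(2,ℤ)-representation:
`(Ŝf)(x) = ∑_{y ∈ F} ζ^{Tr(x^r·y)}·f(y)`. -/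
noncomputable def Shat (r : ℕ) {F : Type*} [Field F] [Fintype F] [Algebra (ZMod r) F]
    (f : F → ℂ) : F → ℂ :=
  fun x => ∑ y : F, zmodExp r (Algebra.trace (ZMod r) F (x ^ r * y)) * f y

/-- The T-matrix of the unfolded SL(2,ℤ)-representation: `(T̂f)(x) = ζ^{−N(x)}·f(x)`. -/
noncomputable def That (r : ℕ) {F : Type*} [Field F] [Fintype F] [Algebra (ZMod r) F]
    (f : F → ℂ) : F → ℂ :=
  fun x => zmodExp r (-(Algebra.norm (ZMod r) x)) * f x

/-- The alternating sum `s(m) = ∑_{j=0}^{r} (−1)^j·ζ^{m·Tr(u^j)}`. -/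
noncomputable def sSum (r : ℕ) {F : Type*} [Field F] [Fintype F] [Algebra (ZMod r) F]
    (u : F) (m : ZMod r) : ℂ :=
  ∑ j ∈ Finset.range (r + 1), (-1 : ℂ) ^ j * zmodExp r (m * Algebra.trace (ZMod r) F (u ^ j))

lemma zmodExp_conj (r : ℕ) [NeZero r] (n : ZMod r) :
    (starRingEnd ℂ) (zmodExp r n) = zmodExp r (-n) := by
  rw [zmodExp, zmodExp, ← Complex.exp_conj]
  rcases eq_or_ne n 0 with h | h
  · simp [h]
  · rw [ZMod.neg_val, if_neg h]
    have hr : (r : ℂ) ≠ 0 := by exact_mod_cast (NeZero.ne r)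
    have hle : n.val ≤ r := (ZMod.val_lt n).le
    have : ((r - n.val : ℕ) : ℂ) = (r : ℂ) - (n.val : ℂ) := by
      push_cast [Nat.cast_sub hle]; ring
    rw [this]
    have : 2 * (Real.pi : ℂ) * Complex.I * ((r : ℂ) - (n.val : ℂ)) / (r : ℂ)
        = 2 * Real.pi * Complex.I + (-(2 * Real.pi * Complex.I * (n.val : ℂ) / r)) := by
      field_simp; ring
    rw [this, Complex.exp_add, Complex.exp_two_pi_mul_I, one_mul]
    congr 1
    simp [map_div₀, map_mul, map_ofNat, Complex.conj_natCast, Complex.conj_I, Complex.conj_ofReal, -ZMod.natCast_val]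
    ring

-- sum over range (n) of f ∘ cast equals sum over ZMod n
lemma sum_range_zmod {n : ℕ} [NeZero n] (f : ZMod n → ℂ) :
    ∑ j ∈ Finset.range n, f (j : ZMod n) = ∑ j : ZMod n, f j :=
  Finset.sum_nbij' (fun j : ℕ => (j : ZMod n)) ZMod.val
    (fun a _ => Finset.mem_univ _)
    (fun a _ => Finset.mem_range.mpr a.val_lt)
    (fun a ha => ZMod.val_cast_of_lt (Finset.mem_range.mp ha))
    (fun a _ => ZMod.natCast_rightInverse a)
    (fun a _ => rfl)

/-- If `r ≡ 1 (mod 4)` then `s(m)` is purely imaginary (`conj s(m) = −s(m)`);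
if `r ≡ 3 (mod 4)` then `s(m)` is real (`conj s(m) = s(m)`). -/
theorem stmt4 (r : ℕ) (hr : r.Prime) (hodd : Odd r) (h3 : r % 3 = 2)
    (F : Type*) [Field F] [Fintype F] [Algebra (ZMod r) F]
    (hcard : Fintype.card F = r ^ 2)
    (u : F) (hu : orderOf u = r + 1) (m : ZMod r) :
    (r % 4 = 1 → (starRingEnd ℂ) (sSum r u m) = -sSum r u m) ∧
    (r % 4 = 3 → (starRingEnd ℂ) (sSum r u m) = sSum r u m) := by
  haveI : NeZero r := ⟨hr.pos.ne'⟩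
  haveI : NeZero (r + 1) := ⟨Nat.succ_ne_zero r⟩
  set k := (r + 1) / 2 with hk
  have h2 : 2 ∣ r + 1 := by obtain ⟨t, ht⟩ := hodd; omega
  have hk2 : k * 2 = r + 1 := Nat.div_mul_cancel h2
  have hu1 : u ^ (r + 1) = 1 := by rw [← hu]; exact pow_orderOf_eq_one u
  have huk : u ^ k = -1 := by
    have hsq : (u ^ k) ^ 2 = 1 := by rw [← pow_mul, hk2, hu1]
    rcases sq_eq_one_iff.mp hsq with h1 | h1
    · exfalso
      have hdvd : r + 1 ∣ k := hu ▸ orderOf_dvd_of_pow_eq_one h1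
      have hkpos : 0 < k := by omega
      have := Nat.le_of_dvd hkpos hdvd
      omega
    · exact h1
  -- key pointwise identity
  have htr : ∀ j : ℕ, Algebra.trace (ZMod r) F (u ^ (j + k)) =
      -Algebra.trace (ZMod r) F (u ^ j) := by
    intro j
    rw [pow_add, huk, mul_neg_one, map_neg]
  have hterm : ∀ j : ℕ,
      (starRingEnd ℂ) ((-1 : ℂ) ^ j * zmodExp r (m * Algebra.trace (ZMod r) F (u ^ j)))
        = (-1 : ℂ) ^ k * ((-1 : ℂ) ^ (j + k)
            * zmodExp r (m * Algebra.trace (ZMod r) F (u ^ (j + k)))) := by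
    intro j
    rw [map_mul, zmodExp_conj, htr j, map_pow, map_neg, map_one, mul_neg,
      ← neg_mul, pow_add, ← mul_assoc, ← mul_assoc]
    congr 1
    have h1 : (-1 : ℂ) ^ k * (-1 : ℂ) ^ j * (-1 : ℂ) ^ k
        = (-1 : ℂ) ^ j * ((-1 : ℂ) ^ (k + k)) := by rw [pow_add]; ring
    rw [h1, Even.neg_one_pow ⟨k, rfl⟩, mul_one]
  -- define the ZMod-indexed term
  set g : ZMod (r + 1) → ℂ := fun j =>
    (-1 : ℂ) ^ j.val * zmodExp r (m * Algebra.trace (ZMod r) F (u ^ j.val)) with hg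
  have hlift : ∀ j : ℕ,
      (-1 : ℂ) ^ j * zmodExp r (m * Algebra.trace (ZMod r) F (u ^ j))
        = g (j : ZMod (r + 1)) := by
    intro j
    have hval : ((j : ZMod (r + 1))).val = j % (r + 1) := ZMod.val_natCast _ j
    rw [hg]
    simp only [hval]
    rw [← hu, pow_mod_orderOf, hu]
    congr 1
    rw [neg_one_pow_eq_pow_mod_two (n := j), neg_one_pow_eq_pow_mod_two (n := j % (r + 1)),
      Nat.mod_mod_of_dvd j h2]
  have hconjsum : (starRingEnd ℂ) (sSum r u m) = (-1 : ℂ) ^ k * sSum r u m := by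
    rw [sSum, map_sum]
    calc ∑ j ∈ Finset.range (r + 1),
          (starRingEnd ℂ) ((-1 : ℂ) ^ j * zmodExp r (m * Algebra.trace (ZMod r) F (u ^ j)))
        = ∑ j ∈ Finset.range (r + 1), (-1 : ℂ) ^ k * g ((j : ZMod (r + 1)) + (k : ZMod (r + 1))) := by
          refine Finset.sum_congr rfl fun j _ => ?_
          rw [hterm j, hlift (j + k)]
          push_cast
          ring_nf
      _ = (-1 : ℂ) ^ k * ∑ j : ZMod (r + 1), g (j + (k : ZMod (r + 1))) := by
          rw [← Finset.mul_sum, sum_range_zmod (fun j => g (j + (k : ZMod (r + 1))))]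
      _ = (-1 : ℂ) ^ k * ∑ j : ZMod (r + 1), g j := by
          congr 1
          exact Fintype.sum_equiv (Equiv.addRight (k : ZMod (r + 1))) _ _ (fun j => rfl)
      _ = (-1 : ℂ) ^ k * sSum r u m := by
          rw [sSum]
          congr 1
          rw [← sum_range_zmod g]
          exact Finset.sum_congr rfl fun j _ => (hlift j).symm
  constructor
  · intro h4
    have hkodd : Odd k := by
      rcases Nat.even_or_odd k with he | ho
      · exfalso; obtain ⟨t, ht⟩ := he; omega
      · exact ho
    rw [hconjsum, hkodd.neg_one_pow, neg_one_mul]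
  · intro h4
    have hkeven : Even k := by
      rcases Nat.even_or_odd k with he | ho
      · exact he
      · exfalso; obtain ⟨t, ht⟩ := ho; omega
    rw [hconjsum, hkeven.neg_one_pow, one_mul]
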